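/- For L ≥ 1, e_{-L}(q) defined via the backward recurrence equals (-1)^L q^{binom(L,2)} d_{L-1}(1/q), and d_{-L}(q) equals (-1)^{L+1} q^{binom(L,2)} e_{L-1}(1/q). -/

import Mathlib

/-- The formal variable `q` in the field of rational functions over `ℚ`. -/
noncomputable def q : RatFunc ℚ := RatFunc.X

/-- The sequence determined by `c_L = c_{L-1} + p^{L-1} c_{L-2}` for `L ≥ 2`,
with initial values `c_0 = c0`, `c_1 = c1`; `rr p 1 1 = e` and `rr p 0 1 = d`. -/
noncomputable def rr (p c0 c1 : RatFunc ℚ) : ℕ → RatFunc ℚ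
  | 0 => c0
  | 1 => c1
  | n + 2 => rr p c0 c1 (n + 1) + p ^ (n + 1) * rr p c0 c1 n

lemma q_ne_zero : q ≠ 0 := RatFunc.X_ne_zero

lemma choose_step (m : ℕ) : (m + 2).choose 2 = (m + 1).choose 2 + (m + 1) := by
  simp [Nat.choose_succ_succ, Nat.choose_one_right]; omega

lemma back_rec (c : ℤ → RatFunc ℚ)
    (hc : ∀ L : ℤ, c L = c (L - 1) + q ^ (L - 1) * c (L - 2)) (n : ℕ) :
    c (-((n : ℤ) + 3)) = q ^ (n + 2) * (c (-((n : ℤ) + 1)) - c (-((n : ℤ) + 2))) := by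
  have h := hc (-((n : ℤ) + 1))
  have e1 : (-((n : ℤ) + 1) - 1) = -((n : ℤ) + 2) := by ring
  have e2 : (-((n : ℤ) + 1) - 2) = -((n : ℤ) + 3) := by ring
  rw [e1, e2] at h
  have e3 : (-((n : ℤ) + 2)) = -(((n + 2 : ℕ) : ℤ)) := by push_cast; ring
  rw [e3, zpow_neg, zpow_natCast] at h
  have hp : q ^ (n + 2) ≠ 0 := pow_ne_zero _ q_ne_zero
  rw [h, ← e3]
  field_simp
  ring

/-- If `ce, cd : ℤ → RatFunc ℚ` satisfy the recurrence `c_L = c_{L-1} + q^{L-1} c_{L-2}`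
for all integers `L` (read forward and backward), with `ce 0 = ce 1 = cd 1 = 1`, `cd 0 = 0`
(so `ce` extends `e` and `cd` extends `d` to negative indices), then for `L ≥ 1`:
`e_{-L}(q) = (-1)^L q^{binom(L,2)} d_{L-1}(1/q)` and
`d_{-L}(q) = (-1)^{L+1} q^{binom(L,2)} e_{L-1}(1/q)`. -/
theorem stmt11 (ce cd : ℤ → RatFunc ℚ)
    (hce : ∀ L : ℤ, ce L = ce (L - 1) + q ^ (L - 1) * ce (L - 2))
    (hcd : ∀ L : ℤ, cd L = cd (L - 1) + q ^ (L - 1) * cd (L - 2))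
    (hce0 : ce 0 = 1) (hce1 : ce 1 = 1) (hcd0 : cd 0 = 0) (hcd1 : cd 1 = 1)
    (L : ℕ) (hL : 1 ≤ L) :
    ce (-(L : ℤ)) = (-1) ^ L * q ^ (L.choose 2) * rr q⁻¹ 0 1 (L - 1) ∧
    cd (-(L : ℤ)) = (-1) ^ (L + 1) * q ^ (L.choose 2) * rr q⁻¹ 1 1 (L - 1) := by
  have hq : q ≠ 0 := q_ne_zero
  have hce1' : ce (-1) = 0 := by
    have h := hce 1
    norm_num at h
    rw [hce0, hce1] at h
    linear_combination -h
  have hcd1' : cd (-1) = 1 := by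
    have h := hcd 1
    norm_num at h
    rw [hcd0, hcd1] at h
    linear_combination -h
  have hce2' : ce (-2) = q := by
    have h := hce 0
    norm_num at h
    rw [hce0, hce1'] at h
    field_simp at h
    linear_combination -h
  have hcd2' : cd (-2) = -q := by
    have h := hcd 0
    norm_num at h
    rw [hcd0, hcd1'] at h
    field_simp at h
    linear_combination -h
  have key : ∀ n : ℕ,
      (ce (-((n : ℤ) + 1)) = (-1) ^ (n + 1) * q ^ ((n + 1).choose 2) * rr q⁻¹ 0 1 n ∧
       cd (-((n : ℤ) + 1)) = (-1) ^ (n + 2) * q ^ ((n + 1).choose 2) * rr q⁻¹ 1 1 n) ∧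
      (ce (-((n : ℤ) + 2)) = (-1) ^ (n + 2) * q ^ ((n + 2).choose 2) * rr q⁻¹ 0 1 (n + 1) ∧
       cd (-((n : ℤ) + 2)) = (-1) ^ (n + 3) * q ^ ((n + 2).choose 2) * rr q⁻¹ 1 1 (n + 1)) := by
    intro n
    induction n with
    | zero =>
      refine ⟨⟨?_, ?_⟩, ?_, ?_⟩ <;>
        norm_num [rr, hce1', hcd1', hce2', hcd2', Nat.choose]
    | succ m ih =>
      obtain ⟨⟨he1, hd1⟩, he2, hd2⟩ := ih
      have em : (-((m : ℤ) + 1 + 1)) = (-((m : ℤ) + 2)) := by ring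
      have em2 : (-((m : ℤ) + 1 + 2)) = (-((m : ℤ) + 3)) := by ring
      push_cast
      rw [em, em2]
      refine ⟨⟨he2, hd2⟩, ?_, ?_⟩
      · rw [back_rec ce hce m, he1, he2,
          show m + 1 + 2 = m + 3 from rfl, show m + 1 + 1 = m + 2 from rfl,
          show rr q⁻¹ 0 1 (m + 2) = rr q⁻¹ 0 1 (m + 1) + q⁻¹ ^ (m + 1) * rr q⁻¹ 0 1 m from rfl,
          choose_step (m + 1), choose_step m, show m + 1 + 1 = m + 2 from rfl]
        rw [inv_pow]
        field_simp
        ring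
      · rw [back_rec cd hcd m, hd1, hd2,
          show m + 1 + 2 = m + 3 from rfl, show m + 1 + 1 = m + 2 from rfl,
          show rr q⁻¹ 1 1 (m + 2) = rr q⁻¹ 1 1 (m + 1) + q⁻¹ ^ (m + 1) * rr q⁻¹ 1 1 m from rfl,
          choose_step (m + 1), choose_step m, show m + 1 + 1 = m + 2 from rfl]
        rw [inv_pow]
        field_simp
        ring
  obtain ⟨n, rfl⟩ : ∃ n, L = n + 1 := ⟨L - 1, by omega⟩
  have h := (key n).1
  constructor
  · push_cast
    simpa [Nat.add_sub_cancel] using h.1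
  · push_cast
    simpa [Nat.add_sub_cancel, show n + 1 + 1 = n + 2 from rfl] using h.2
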